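/- Let D and E be real symmetric n×n matrices and let C be the 2n×2n real symmetric matrix with block form [[D, E],[E, -D]]. Then the maximum of the absolute values of the eigenvalues of C equals the largest singular value of the complex matrix D + iE. -/

import Mathlib

open Matrix

section Aux

variable {m : Type*} [Fintype m] [DecidableEq m]

private lemma aux_mem_spectrum_iff_det {K : Type*} [Field K] (A : Matrix m m K) (μ : K) :
    μ ∈ spectrum K A ↔ (μ • (1 : Matrix m m K) - A).det = 0 := by
  rw [spectrum.mem_iff, Matrix.isUnit_iff_isUnit_det, isUnit_iff_ne_zero, not_ne_iff,
    Algebra.algebraMap_eq_smul_one]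

private lemma aux_factor {K : Type*} [Field K] (A : Matrix m m K) (y : K) :
    (y * y) • (1 : Matrix m m K) - A * A = (y • 1 - A) * (y • 1 + A) := by
  simp only [sub_mul, mul_add, smul_mul_assoc, mul_smul_comm, smul_smul, one_mul, mul_one,
    smul_add, smul_sub]
  abel

private lemma aux_map_smul_one_sub {n : ℕ} (x : ℝ) (A : Matrix (Fin n ⊕ Fin n) (Fin n ⊕ Fin n) ℝ) :
    (x • (1 : Matrix (Fin n ⊕ Fin n) (Fin n ⊕ Fin n) ℝ) - A).map Complex.ofReal
      = (x : ℂ) • 1 - A.map Complex.ofReal := by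
  ext i j
  by_cases h : i = j <;> simp [h, Matrix.one_apply, Matrix.map_apply]

private lemma aux_det_map {n : ℕ} (A : Matrix (Fin n ⊕ Fin n) (Fin n ⊕ Fin n) ℝ) :
    (A.map Complex.ofReal).det = (A.det : ℂ) := by
  exact (RingHom.map_det Complex.ofRealHom A).symm

/-- The conjugating matrix. -/
private noncomputable def Smat (n : ℕ) : Matrix (Fin n ⊕ Fin n) (Fin n ⊕ Fin n) ℂ :=
  fromBlocks 1 1 (Complex.I • 1) ((-Complex.I) • 1)

/-- Its inverse. -/
private noncomputable def Tmat (n : ℕ) : Matrix (Fin n ⊕ Fin n) (Fin n ⊕ Fin n) ℂ :=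
  fromBlocks ((1/2 : ℂ) • 1) ((-Complex.I/2) • 1) ((1/2 : ℂ) • 1) ((Complex.I/2) • 1)

private theorem Smat_mul_Tmat {n : ℕ} : Smat n * Tmat n = 1 := by
  rw [Smat, Tmat, fromBlocks_multiply, ← fromBlocks_one]
  refine fromBlocks_inj.mpr ⟨?_, ?_, ?_, ?_⟩ <;>
  · simp only [smul_mul_assoc, mul_smul_comm, smul_smul, one_mul, mul_one, ← add_smul]
    simp only [smul_one_eq_diagonal, ← diagonal_smul, ← diagonal_one, ← diagonal_zero,
      diagonal_eq_diagonal_iff]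
    intro i
    simp only [Pi.smul_apply, smul_eq_mul, mul_one]
    first
    | ring1
    | linear_combination Complex.I_mul_I/2
    | linear_combination -Complex.I_mul_I/2
    | linear_combination Complex.I_mul_I
    | linear_combination -Complex.I_mul_I

private theorem Tmat_mul_Smat {n : ℕ} : Tmat n * Smat n = 1 := by
  rw [Smat, Tmat, fromBlocks_multiply, ← fromBlocks_one]
  refine fromBlocks_inj.mpr ⟨?_, ?_, ?_, ?_⟩ <;>
  · simp only [smul_mul_assoc, mul_smul_comm, smul_smul, one_mul, mul_one, ← add_smul]
    simp only [smul_one_eq_diagonal, ← diagonal_smul, ← diagonal_one, ← diagonal_zero,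
      diagonal_eq_diagonal_iff]
    intro i
    simp only [Pi.smul_apply, smul_eq_mul, mul_one]
    first
    | ring1
    | linear_combination Complex.I_mul_I/2
    | linear_combination -Complex.I_mul_I/2
    | linear_combination Complex.I_mul_I
    | linear_combination -Complex.I_mul_I

private theorem aux_block_mul {n : ℕ} (Dc Ec : Matrix (Fin n) (Fin n) ℂ) :
    fromBlocks Dc Ec Ec (-Dc) * fromBlocks Dc Ec Ec (-Dc) * Smat n
      = Smat n * fromBlocks ((Dc - Complex.I • Ec) * (Dc + Complex.I • Ec)) 0 0
          ((Dc + Complex.I • Ec) * (Dc - Complex.I • Ec)) := by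
  rw [Smat, fromBlocks_multiply, fromBlocks_multiply, fromBlocks_multiply]
  refine fromBlocks_inj.mpr ⟨?_, ?_, ?_, ?_⟩ <;>
  · simp only [mul_one, one_mul, mul_zero, zero_mul, add_zero, zero_add, mul_add, add_mul,
      mul_sub, sub_mul, mul_neg, neg_mul, smul_mul_assoc, mul_smul_comm, smul_smul,
      Complex.I_mul_I, one_smul, neg_smul, neg_neg, smul_add, smul_sub, smul_neg]
    module

/-- The key determinant identity. -/
private theorem aux_det_key {n : ℕ} (D E : Matrix (Fin n) (Fin n) ℝ)
    (hD : D.IsSymm) (hE : E.IsSymm) (c : ℂ) :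
    (c • 1 - ((fromBlocks D E E (-D)).map Complex.ofReal)
        * ((fromBlocks D E E (-D)).map Complex.ofReal)).det
      = ((c • 1 - (D.map Complex.ofReal + Complex.I • E.map Complex.ofReal)
            * (D.map Complex.ofReal + Complex.I • E.map Complex.ofReal)ᴴ).det) ^ 2 := by
  set Dc := D.map Complex.ofReal with hDc
  set Ec := E.map Complex.ofReal with hEc
  set M := Dc + Complex.I • Ec with hMdef
  have hMH : Mᴴ = Dc - Complex.I • Ec := by
    ext i j
    simp only [hMdef, hDc, hEc, conjTranspose_apply, Matrix.add_apply, Matrix.smul_apply,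
      Matrix.map_apply, Matrix.sub_apply, star_add, smul_eq_mul, star_mul', Complex.star_def,
      Complex.conj_I, Complex.conj_ofReal, neg_mul]
    rw [hD.apply, hE.apply]
    ring
  have hDcT : Dcᵀ = Dc := by
    ext i j
    simp only [hDc, transpose_apply, Matrix.map_apply]
    rw [hD.apply]
  have hEcT : Ecᵀ = Ec := by
    ext i j
    simp only [hEc, transpose_apply, Matrix.map_apply]
    rw [hE.apply]
  have hMT : Mᵀ = M := by
    rw [hMdef, transpose_add, transpose_smul, hDcT, hEcT]
  have hT : (Mᴴ * M)ᵀ = M * Mᴴ := by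
    rw [transpose_mul, hMT]
    congr 1
    rw [hMH, transpose_sub, transpose_smul, hDcT, hEcT, ← hMH]
  have hCc : (fromBlocks D E E (-D)).map Complex.ofReal = fromBlocks Dc Ec Ec (-Dc) := by
    have hnegmap : (-D).map Complex.ofReal = -(D.map Complex.ofReal) := by
      ext i j; simp
    rw [fromBlocks_map, hnegmap]
  set G : Matrix (Fin n ⊕ Fin n) (Fin n ⊕ Fin n) ℂ := fromBlocks (Mᴴ * M) 0 0 (M * Mᴴ) with hG
  have h1 : (fromBlocks D E E (-D)).map Complex.ofReal
      * ((fromBlocks D E E (-D)).map Complex.ofReal) * Smat n = Smat n * G := by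
    rw [hCc, hG, hMH, hMdef]
    exact aux_block_mul Dc Ec
  have hconj : (fromBlocks D E E (-D)).map Complex.ofReal
      * ((fromBlocks D E E (-D)).map Complex.ofReal) = Smat n * G * Tmat n := by
    calc (fromBlocks D E E (-D)).map Complex.ofReal
        * ((fromBlocks D E E (-D)).map Complex.ofReal)
        = (fromBlocks D E E (-D)).map Complex.ofReal
            * ((fromBlocks D E E (-D)).map Complex.ofReal) * (Smat n * Tmat n) := by
          rw [Smat_mul_Tmat, mul_one]
      _ = ((fromBlocks D E E (-D)).map Complex.ofReal
            * ((fromBlocks D E E (-D)).map Complex.ofReal) * Smat n) * Tmat n := by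
          simp only [mul_assoc]
      _ = Smat n * G * Tmat n := by rw [h1]
  have h2 : c • 1 - Smat n * G * Tmat n = Smat n * (c • 1 - G) * Tmat n := by
    rw [Matrix.mul_sub, Matrix.sub_mul, mul_smul_comm, mul_one, smul_mul_assoc, Smat_mul_Tmat]
  have hdetST : (Smat n).det * (Tmat n).det = 1 := by
    rw [← det_mul, Smat_mul_Tmat, det_one]
  have hGdet : (c • 1 - G).det = (c • 1 - M * Mᴴ).det ^ 2 := by
    have hblocks : c • (1 : Matrix (Fin n ⊕ Fin n) (Fin n ⊕ Fin n) ℂ) - G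
        = fromBlocks (c • 1 - Mᴴ * M) 0 0 (c • 1 - M * Mᴴ) := by
      rw [hG, ← fromBlocks_one, fromBlocks_smul]
      simp only [sub_eq_add_neg, fromBlocks_neg, fromBlocks_add, smul_zero, add_zero, neg_zero,
        zero_add]
    have hdet1 : (c • (1 : Matrix (Fin n) (Fin n) ℂ) - Mᴴ * M).det
        = (c • 1 - M * Mᴴ).det := by
      rw [← Matrix.det_transpose (c • 1 - Mᴴ * M), transpose_sub, transpose_smul,
        transpose_one, hT]
    rw [hblocks, det_fromBlocks_zero₁₂, hdet1, sq]
  rw [hconj, h2, det_mul, det_mul]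
  calc (Smat n).det * (c • 1 - G).det * (Tmat n).det
      = ((Smat n).det * (Tmat n).det) * (c • 1 - G).det := by ring
    _ = (c • 1 - M * Mᴴ).det ^ 2 := by rw [hdetST, one_mul, hGdet]

end Aux

/-- For real symmetric `D`, `E` and `C = [[D, E],[E, -D]]`, the maximum of
the absolute values of the eigenvalues of `C` equals the largest singular value of `D + iE`,
i.e. the square root of the largest eigenvalue of `(D + iE)(D + iE)ᴴ`. -/
theorem max_abs_eigenvalue_block_eq_max_singular_value {n : ℕ} (hn : 0 < n)
    (D E : Matrix (Fin n) (Fin n) ℝ) (hD : D.IsSymm) (hE : E.IsSymm)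
    (hC : (Matrix.fromBlocks D E E (-D)).IsHermitian)
    (hM : ((D.map Complex.ofReal + Complex.I • E.map Complex.ofReal) *
        (D.map Complex.ofReal + Complex.I • E.map Complex.ofReal)ᴴ).IsHermitian) :
    (⨆ i, |hC.eigenvalues i|) = Real.sqrt (⨆ i, hM.eigenvalues i) := by
  haveI : Nonempty (Fin n) := ⟨⟨0, hn⟩⟩
  set Cmat : Matrix (Fin n ⊕ Fin n) (Fin n ⊕ Fin n) ℝ := Matrix.fromBlocks D E E (-D) with hCmat
  set M : Matrix (Fin n) (Fin n) ℂ :=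
    D.map Complex.ofReal + Complex.I • E.map Complex.ofReal with hMdef
  set Cc : Matrix (Fin n ⊕ Fin n) (Fin n ⊕ Fin n) ℂ := Cmat.map Complex.ofReal with hCc
  -- determinant characterizations
  have hdet_key : ∀ c : ℂ, (c • 1 - Cc * Cc).det = ((c • 1 - M * Mᴴ).det) ^ 2 :=
    fun c => aux_det_key D E hD hE c
  have hCspec : spectrum ℝ Cmat = Set.range hC.eigenvalues :=
    Matrix.IsHermitian.spectrum_real_eq_range_eigenvalues hC
  have hMspec : spectrum ℝ (M * Mᴴ) = Set.range hM.eigenvalues :=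
    Matrix.IsHermitian.spectrum_real_eq_range_eigenvalues hM
  -- real spectrum membership via complex determinant
  have hCdet : ∀ y : ℝ, y ∈ spectrum ℝ Cmat ↔ ((y : ℂ) • 1 - Cc).det = 0 := by
    intro y
    rw [aux_mem_spectrum_iff_det,
      show ((y : ℂ) • 1 - Cc) = (y • 1 - Cmat).map Complex.ofReal from
        (aux_map_smul_one_sub y Cmat).symm, aux_det_map]
    exact Complex.ofReal_eq_zero.symm
  have hMdet : ∀ x : ℝ, x ∈ spectrum ℝ (M * Mᴴ) ↔ ((x : ℂ) • 1 - M * Mᴴ).det = 0 := by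
    intro x
    rw [← spectrum.algebraMap_mem_iff ℂ, show (algebraMap ℝ ℂ) x = (x : ℂ) from rfl,
      aux_mem_spectrum_iff_det]
  -- the key range equality
  have hrange : Set.range (fun i => (hC.eigenvalues i) ^ 2) = Set.range hM.eigenvalues := by
    ext x
    constructor
    · rintro ⟨i, rfl⟩
      set y : ℝ := hC.eigenvalues i with hy
      have hy1 : y ∈ spectrum ℝ Cmat := hCspec ▸ Set.mem_range_self i
      have hy2 : ((y : ℂ) • 1 - Cc).det = 0 := (hCdet y).mp hy1
      have hsq : (((y ^ 2 : ℝ) : ℂ) • 1 - Cc * Cc).det = 0 := by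
        have : ((y ^ 2 : ℝ) : ℂ) = (y : ℂ) * (y : ℂ) := by push_cast; ring
        rw [this, aux_factor, det_mul, hy2, zero_mul]
      have := hdet_key ((y ^ 2 : ℝ) : ℂ)
      rw [hsq] at this
      have h0 : (((y ^ 2 : ℝ) : ℂ) • 1 - M * Mᴴ).det = 0 :=
        sq_eq_zero_iff.mp this.symm
      rw [← hMspec]
      exact (hMdet (y ^ 2)).mpr h0
    · rintro ⟨j, rfl⟩
      set x : ℝ := hM.eigenvalues j with hx
      have hx0 : 0 ≤ x :=
        Matrix.eigenvalues_self_mul_conjTranspose_nonneg M j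
      set z : ℝ := Real.sqrt x with hzdef
      have hz : z ^ 2 = x := Real.sq_sqrt hx0
      have hx1 : x ∈ spectrum ℝ (M * Mᴴ) := hMspec ▸ Set.mem_range_self j
      have hx2 : ((x : ℂ) • 1 - M * Mᴴ).det = 0 := (hMdet x).mp hx1
      have hx3 : ((x : ℂ) • 1 - Cc * Cc).det = 0 := by
        rw [hdet_key, hx2]
        ring
      have hfac : ((z : ℂ) • 1 - Cc).det * ((z : ℂ) • 1 + Cc).det = 0 := by
        rw [← det_mul, ← aux_factor]
        have : ((z : ℂ) * (z : ℂ)) = (x : ℂ) := by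
          push_cast [← hz]; ring
        rw [this]
        exact hx3
      rcases mul_eq_zero.mp hfac with h | h
      · have hzmem : z ∈ spectrum ℝ Cmat := (hCdet z).mpr h
        rw [hCspec] at hzmem
        obtain ⟨i, hi⟩ := hzmem
        refine ⟨i, ?_⟩
        show hC.eigenvalues i ^ 2 = x
        rw [hi, hz]
      · have hneg : (((-z : ℝ) : ℂ) • 1 - Cc).det = 0 := by
          have heq : ((z : ℂ) • 1 + Cc) = -((((-z : ℝ) : ℂ)) • 1 - Cc) := by
            push_cast
            rw [neg_sub, neg_smul, sub_neg_eq_add, add_comm]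
          rw [heq, Matrix.det_neg] at h
          have hcard : Fintype.card (Fin n ⊕ Fin n) = n + n := by
            simp [Fintype.card_sum]
          rw [hcard, Even.neg_one_pow ⟨n, rfl⟩, one_mul] at h
          exact h
        have hzmem : (-z : ℝ) ∈ spectrum ℝ Cmat := (hCdet (-z)).mpr hneg
        rw [hCspec] at hzmem
        obtain ⟨i, hi⟩ := hzmem
        refine ⟨i, ?_⟩
        show hC.eigenvalues i ^ 2 = x
        rw [hi, neg_sq, hz]
  -- supremum bookkeeping
  have hbddC : BddAbove (Set.range fun i => |hC.eigenvalues i|) :=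
    (Set.finite_range _).bddAbove
  have hbddC2 : BddAbove (Set.range fun i => (hC.eigenvalues i) ^ 2) :=
    (Set.finite_range _).bddAbove
  obtain ⟨i0, hi0⟩ := exists_eq_ciSup_of_finite (f := fun i => |hC.eigenvalues i|)
  have ha : 0 ≤ ⨆ i, |hC.eigenvalues i| := hi0 ▸ abs_nonneg _
  have hsq : (⨆ i, |hC.eigenvalues i|) ^ 2 = ⨆ i, (hC.eigenvalues i) ^ 2 := by
    apply le_antisymm
    · rw [← hi0, sq_abs]
      exact le_ciSup hbddC2 i0
    · refine ciSup_le fun i => ?_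
      have h1 : |hC.eigenvalues i| ≤ ⨆ i, |hC.eigenvalues i| := le_ciSup hbddC i
      calc (hC.eigenvalues i) ^ 2 = |hC.eigenvalues i| ^ 2 := (sq_abs _).symm
        _ ≤ (⨆ i, |hC.eigenvalues i|) ^ 2 := by
            exact pow_le_pow_left₀ (abs_nonneg _) h1 2
  have hsup_eq : (⨆ i, (hC.eigenvalues i) ^ 2) = ⨆ j, hM.eigenvalues j := by
    rw [iSup, iSup, hrange]
  rw [← hsup_eq, ← hsq, Real.sqrt_sq ha]
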